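/- Let X be a compact metric space, Y a closed subset, and (Y_n) pairwise disjoint nonempty clopen subsets of X with ⋃ Y_n = X \ Y and diam(Y_n) → 0. Let F : X → ℂ be continuous, fix x ∈ Y and r > 0 with F = 0 on closedBall(x,r) ∩ Y, and let S = {n : Y_n ∩ closedBall(x,r) ≠ ∅}. Define U = ⋃_{n∈S} Y_n and f̃ = (1 − χ_U)·F. Then f̃ is continuous on X and vanishes on X ∩ ball(x,r). -/

import Mathlib

open Set Metric Filter Topology

/-- The modification `f̃ = (1 - χ_U)·F` is continuous on `X` and vanishes on `ball x r`,
where `U` is the union of those clopen pieces `Yn n` meeting `closedBall x r`. -/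
theorem stmt5 {X : Type*} [MetricSpace X] [CompactSpace X]
    (Y : Set X) (hYcl : IsClosed Y) (hYne : Y.Nonempty)
    (Yn : ℕ → Set X) (hclopen : ∀ m, IsClopen (Yn m)) (hne : ∀ m, (Yn m).Nonempty)
    (hdisj : Pairwise (Function.onFun Disjoint Yn)) (hunion : (⋃ m, Yn m) = Yᶜ)
    (hdiam : Tendsto (fun m => Metric.diam (Yn m)) atTop (nhds 0))
    (F : X → ℂ) (hF : Continuous F)
    (x : X) (hx : x ∈ Y) (r : ℝ) (hr : 0 < r)
    (hvan : ∀ z ∈ closedBall x r ∩ Y, F z = 0)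
    (U : Set X) (hU : U = ⋃ m ∈ {m | (Yn m ∩ closedBall x r).Nonempty}, Yn m) :
    Continuous (fun z => (1 - U.indicator (1 : X → ℂ) z) * F z) ∧
      ∀ z ∈ ball x r, (1 - U.indicator (1 : X → ℂ) z) * F z = 0 := by
  have hUopen : IsOpen U := by
    rw [hU]; exact isOpen_biUnion fun m _ => (hclopen m).isOpen
  -- membership in U from a piece meeting the closed ball
  have hmemU : ∀ m, (Yn m ∩ closedBall x r).Nonempty → ∀ w ∈ Yn m, w ∈ U := by
    intro m hm w hw
    rw [hU]
    exact mem_biUnion hm hw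
  -- boundary points of U lie in Y
  have hYmem : ∀ z, z ∈ closure U → z ∉ U → z ∈ Y := by
    intro z hcl hnot
    by_contra hz
    have hz' : z ∈ ⋃ m, Yn m := by rw [hunion]; exact hz
    obtain ⟨m, hm⟩ := mem_iUnion.mp hz'
    obtain ⟨w, hw1, hw2⟩ := mem_closure_iff.mp hcl _ (hclopen m).isOpen hm
    rw [hU] at hw2
    obtain ⟨k, hk, hwk⟩ := mem_iUnion₂.mp hw2
    rcases eq_or_ne k m with rfl | hne'
    · exact hnot (hmemU k hk z hm)
    · exact (hdisj hne').ne_of_mem hwk hw1 rfl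
  -- boundary points of U lie in the closed ball
  have hdist : ∀ z, z ∈ closure U → z ∉ U → dist z x ≤ r := by
    intro z hcl hnot
    refine le_of_forall_pos_le_add fun ε hε => ?_
    obtain ⟨N, hN⟩ := (Metric.tendsto_atTop.mp hdiam (ε/3) (by linarith)).imp
      fun N h n hn => (h n hn)
    have hK : IsClosed (⋃ n ∈ Finset.range N, Yn n) :=
      (Finset.range N).finite_toSet.isClosed_biUnion fun n _ => (hclopen n).isClosed
    have hzK : z ∉ ⋃ n ∈ Finset.range N, Yn n := by
      intro h
      obtain ⟨n, _, hn⟩ := mem_iUnion₂.mp h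
      exact (hunion ▸ (mem_iUnion.mpr ⟨n, hn⟩) : z ∈ Yᶜ) (hYmem z hcl hnot)
    obtain ⟨δ, hδ, hδball⟩ := Metric.isOpen_iff.mp hK.isOpen_compl z hzK
    obtain ⟨w, hwball, hwU⟩ := mem_closure_iff.mp hcl (ball z (min δ (ε/3)))
      isOpen_ball (mem_ball_self (lt_min hδ (by linarith)))
    rw [hU] at hwU
    obtain ⟨m, hmS, hwm⟩ := mem_iUnion₂.mp hwU
    have hmN : N ≤ m := by
      by_contra h
      exact hδball (ball_subset_ball (min_le_left _ _) hwball)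
        (mem_iUnion₂.mpr ⟨m, Finset.mem_range.mpr (not_le.mp h), hwm⟩)
    obtain ⟨p, hpm, hpball⟩ := hmS
    have hdiamm : dist w p ≤ ε/3 := by
      have := hN m hmN
      rw [Real.dist_eq, sub_zero, abs_of_nonneg Metric.diam_nonneg] at this
      exact (Metric.dist_le_diam_of_mem ((hclopen m).isClosed.isCompact.isBounded)
        hwm hpm).trans this.le
    have h1 : dist z w ≤ ε/3 := by
      have h := mem_ball.mp hwball
      rw [dist_comm] at h
      exact (h.trans_le (min_le_right _ _)).le
    have h2 : dist p x ≤ r := mem_closedBall.mp hpball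
    calc dist z x ≤ dist z w + dist w p + dist p x := dist_triangle4 z w p x
      _ ≤ ε/3 + ε/3 + r := by linarith
      _ ≤ r + ε := by linarith
  have hF0 : ∀ z, z ∈ closure U → z ∉ U → F z = 0 := fun z h1 h2 =>
    hvan z ⟨mem_closedBall.mpr (hdist z h1 h2), hYmem z h1 h2⟩
  constructor
  · rw [continuous_iff_continuousAt]
    intro z
    by_cases hz : z ∈ U
    · have heq : (fun w => (1 - U.indicator (1 : X → ℂ) w) * F w) =ᶠ[𝓝 z]
          fun _ => (0 : ℂ) := by
        filter_upwards [hUopen.mem_nhds hz] with w hw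
        simp [Set.indicator_of_mem hw]
      exact (continuousAt_congr heq).mpr continuousAt_const
    · by_cases hzc : z ∈ closure U
      · -- boundary point: squeeze
        have hFz : F z = 0 := hF0 z hzc hz
        have hval : (1 - U.indicator (1 : X → ℂ) z) * F z = 0 := by
          simp [hFz]
        unfold ContinuousAt
        rw [show (fun w => (1 - U.indicator (1 : X → ℂ) w) * F w) z = 0 from hval]
        refine squeeze_zero_norm (a := fun w => ‖F w‖) (fun w => ?_) ?_
        · rw [norm_mul]
          by_cases hw : w ∈ U
          · simp [Set.indicator_of_mem hw]
          · simp [Set.indicator_of_notMem hw]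
        · have := (hF.norm.tendsto z)
          rwa [hFz, norm_zero] at this
      · have heq : (fun w => (1 - U.indicator (1 : X → ℂ) w) * F w) =ᶠ[𝓝 z] F := by
          filter_upwards [(isClosed_closure (s := U)).isOpen_compl.mem_nhds hzc]
            with w hw
          have : w ∉ U := fun h => hw (subset_closure h)
          simp [Set.indicator_of_notMem this]
        exact (continuousAt_congr heq).mpr hF.continuousAt
  · intro z hz
    by_cases hzY : z ∈ Y
    · have : F z = 0 := hvan z ⟨ball_subset_closedBall hz, hzY⟩
      simp [this]
    · have hz' : z ∈ ⋃ m, Yn m := by rw [hunion]; exact hzY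
      obtain ⟨m, hm⟩ := mem_iUnion.mp hz'
      have : z ∈ U := hmemU m ⟨z, hm, ball_subset_closedBall hz⟩ z hm
      simp [Set.indicator_of_mem this]
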